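/- For fixed t ≥ t₀, γ > 0, n > 0, 0 < x₀ < k, with A = (k/x₀)^n − 1 > 0, the limit as p → 1 of (γ n (p-1)(t-t₀) + A^{1-p})^{1/(1-p)} equals A · e^{−γ n (t−t₀)}. -/

import Mathlib

open Real Filter

/-- As `p → 1`, the exponent expression of the general curve converges to
`A * exp (-γ n (t - t₀))`, recovering the Bertalanffy–Richards curve. -/
theorem limit_p_to_one_Richards
    (γ n k x₀ t₀ t : ℝ) (hγ : 0 < γ) (hn : 0 < n) (hx₀ : 0 < x₀) (hx₀k : x₀ < k)
    (ht : t₀ ≤ t) (A : ℝ) (hA : A = (k / x₀) ^ n - 1) :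
    Tendsto (fun p : ℝ => (γ * n * (p - 1) * (t - t₀) + A ^ (1 - p)) ^ (1 / (1 - p)))
      (nhdsWithin 1 {1}ᶜ) (nhds (A * Real.exp (-(γ * n * (t - t₀))))) := by
  have hk : 1 < k / x₀ := (one_lt_div hx₀).mpr hx₀k
  have hA0 : 0 < A := by
    rw [hA, sub_pos]
    exact Real.one_lt_rpow_iff_of_pos (by positivity) |>.mpr (Or.inl ⟨hk, hn⟩)
  set c : ℝ := γ * n * (t - t₀) with hc
  -- base function in terms of s = 1 - p
  set b : ℝ → ℝ := fun s => A ^ s - c * s with hb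
  have hb0 : b 0 = 1 := by simp [hb, Real.rpow_zero]
  have hbd : HasDerivAt b (Real.log A - c) 0 := by
    have h1 : HasDerivAt (fun s : ℝ => A ^ s) (A ^ (0:ℝ) * Real.log A) 0 :=
      (Real.hasStrictDerivAt_const_rpow hA0 0).hasDerivAt
    have h2 : HasDerivAt (fun s : ℝ => c * s) c 0 := by
      simpa using (hasDerivAt_id (0:ℝ)).const_mul c
    have h3 := h1.sub h2
    rw [Real.rpow_zero, one_mul] at h3
    exact h3
  -- derivative of log ∘ b at 0
  have hg : HasDerivAt (fun s => Real.log (b s)) (Real.log A - c) 0 := by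
    have := hbd.log (by rw [hb0]; norm_num)
    simpa [hb0] using this
  have hslope : Tendsto (fun s => Real.log (b s) / s) (nhdsWithin 0 {0}ᶜ)
      (nhds (Real.log A - c)) := by
    have := hasDerivAt_iff_tendsto_slope.mp hg
    refine this.congr' ?_
    filter_upwards [self_mem_nhdsWithin] with s hs
    simp [slope, hb0, div_eq_inv_mul]
  have hexp : Tendsto (fun s => Real.exp (Real.log (b s) / s)) (nhdsWithin 0 {0}ᶜ)
      (nhds (A * Real.exp (-c))) := by
    have := (Real.continuous_exp.tendsto _).comp hslope
    have heq : Real.exp (Real.log A - c) = A * Real.exp (-c) := by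
      rw [Real.exp_sub, Real.exp_log hA0, Real.exp_neg, div_eq_mul_inv]
    rwa [heq] at this
  -- change of variables p ↦ 1 - p
  have hmap : Tendsto (fun p : ℝ => 1 - p) (nhdsWithin 1 {1}ᶜ) (nhdsWithin 0 {0}ᶜ) := by
    apply tendsto_nhdsWithin_of_tendsto_nhds_of_eventually_within
    · have : Continuous (fun p : ℝ => 1 - p) := by continuity
      exact (this.tendsto 1).mono_left nhdsWithin_le_nhds |>.congr' (by filter_upwards with p; rfl) |>.mono_right (by simp)
    · filter_upwards [self_mem_nhdsWithin] with p hp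
      simp only [Set.mem_compl_iff, Set.mem_singleton_iff] at hp ⊢
      intro h
      apply hp
      linarith [sub_eq_zero.mp h]
  have hcomp : Tendsto (fun p : ℝ => Real.exp (Real.log (b (1 - p)) / (1 - p)))
      (nhdsWithin 1 {1}ᶜ) (nhds (A * Real.exp (-c))) := hexp.comp hmap
  -- eventual positivity of the base
  have hbpos : ∀ᶠ s in nhds (0:ℝ), 0 < b s := by
    have hcont : ContinuousAt b 0 := hbd.continuousAt
    have := (continuousAt_const (y := (0:ℝ))).eventually_lt hcont (by rw [hb0]; norm_num)
    filter_upwards [this] with s hs; exact hs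
  have hev : ∀ᶠ p in nhdsWithin 1 {1}ᶜ,
      Real.exp (Real.log (b (1 - p)) / (1 - p)) =
        (γ * n * (p - 1) * (t - t₀) + A ^ (1 - p)) ^ (1 / (1 - p)) := by
    filter_upwards [(hmap.mono_right nhdsWithin_le_nhds).eventually hbpos] with p hp
    have hbase : γ * n * (p - 1) * (t - t₀) + A ^ (1 - p) = b (1 - p) := by
      simp only [hb, hc]; ring
    rw [hbase, Real.rpow_def_of_pos hp, one_div, div_eq_inv_mul, mul_comm]
  exact hcomp.congr' hev
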